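/- Let D be a squarefree positive integer with D ≠ 3 (equivalently, √−D ∉ ℚ(ζ_6)). If a triple (t, r, q) of nonzero polynomials in ℚ[x] parameterizes a complete family of pairing-friendly elliptic curves with embedding degree k = 6 and CM discriminant D, then ρ(t, r, q) ≠ 1, i.e., deg q ≠ deg r. -/

import Mathlib

open Polynomial

set_option maxHeartbeats 1000000


lemma divisors_six : Nat.divisors 6 = {1, 2, 3, 6} := by decide

lemma cyclotomic_six' : cyclotomic 6 ℚ = X ^ 2 - X + 1 := by
  have h := prod_cyclotomic_eq_X_pow_sub_one (by norm_num : 0 < 6) ℚ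
  rw [divisors_six] at h
  have h2 : ({1, 2, 3, 6} : Finset ℕ).prod (fun i => cyclotomic i ℚ)
      = cyclotomic 1 ℚ * (cyclotomic 2 ℚ * (cyclotomic 3 ℚ * cyclotomic 6 ℚ)) := by
    simp [Finset.prod_insert]
  rw [h2, cyclotomic_one, cyclotomic_two, cyclotomic_three] at h
  have hnz : ((X:ℚ[X]) - 1) * ((X + 1) * (X ^ 2 + X + 1)) ≠ 0 := by
    intro hc
    have := congrArg (eval 2) hc
    norm_num at this
  have key : ((X:ℚ[X]) - 1) * ((X + 1) * (X ^ 2 + X + 1)) * cyclotomic 6 ℚ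
      = ((X:ℚ[X]) - 1) * ((X + 1) * (X ^ 2 + X + 1)) * (X ^ 2 - X + 1) := by
    linear_combination h
  exact mul_left_cancel₀ hnz key

lemma rat_sq_int (x : ℚ) (k : ℤ) (h : x ^ 2 = (k : ℚ)) : ∃ z : ℤ, (z : ℚ) = x ∧ z ^ 2 = k := by
  have hx : x * x = (k : ℚ) := by rw [← sq]; exact h
  have hden : x.den * x.den = 1 := by
    have := Rat.mul_self_den x
    rw [hx, Rat.den_intCast] at this
    omega
  have hd1 : x.den = 1 := by nlinarith
  have hz : (x.num : ℚ) = x := (Rat.den_eq_one_iff x).mp hd1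
  refine ⟨x.num, hz, ?_⟩
  have : ((x.num ^ 2 : ℤ) : ℚ) = ((k : ℤ) : ℚ) := by push_cast [hz]; rw [h]
  exact_mod_cast this

lemma no_sq_16n5 (z n : ℤ) : z ^ 2 ≠ 16 * n + 5 := by
  intro h
  have h8 : ((z : ZMod 8)) ^ 2 = 16 * (n : ZMod 8) + 5 := by
    have := congrArg (Int.cast : ℤ → ZMod 8) h
    push_cast at this
    linear_combination this
  have h16 : (16 : ZMod 8) = 0 := by decide
  rw [h16, zero_mul, zero_add] at h8
  revert h8
  generalize (z : ZMod 8) = w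
  revert w
  decide

lemma coeff_sq_two_mul (p : ℚ[X]) : (p ^ 2).coeff (2 * p.natDegree) = p.leadingCoeff ^ 2 := by
  rw [show 2 * p.natDegree = (p ^ 2).natDegree by rw [natDegree_pow], coeff_natDegree,
    leadingCoeff_pow]

/-- `f ∈ ℚ[x]` represents integers: there is an integer `a` with `f(a) ∈ ℤ`. -/
def RepresentsIntegers (f : ℚ[X]) : Prop :=
  ∃ a n : ℤ, f.eval (a : ℚ) = (n : ℚ)

/-- `f ∈ ℚ[x]` represents primes: `f` is nonconstant, irreducible over `ℚ`,
has positive leading coefficient, represents integers, and no prime number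
divides every integer value `f(a)` with `a ∈ ℤ`, `f(a) ∈ ℤ`. -/
def RepresentsPrimes (f : ℚ[X]) : Prop :=
  0 < f.natDegree ∧ Irreducible f ∧ 0 < f.leadingCoeff ∧ RepresentsIntegers f ∧
    ∀ p : ℕ, p.Prime → ∃ a n : ℤ, f.eval (a : ℚ) = (n : ℚ) ∧ ¬ (p : ℤ) ∣ n

/-- `(t, r, q)` parameterizes a complete family of pairing-friendly elliptic curves
with embedding degree `k` and CM discriminant `D`:
(i) `r` represents primes; (ii) `q` represents primes; (iii) `r ∣ q + 1 - t`;
(iv) `r ∣ Φ_k(t - 1)`; (v) `D·y² = 4q - t²` for some `y ∈ ℚ[x]`. -/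
def IsCompleteFamily (k D : ℕ) (t r q : ℚ[X]) : Prop :=
  t ≠ 0 ∧ r ≠ 0 ∧ q ≠ 0 ∧
  RepresentsPrimes r ∧ RepresentsPrimes q ∧
  r ∣ (q + 1 - t) ∧
  r ∣ (cyclotomic k ℚ).comp (t - 1) ∧
  ∃ y : ℚ[X], (D : ℚ[X]) * y ^ 2 = 4 * q - t ^ 2

/-- No ideal complete family with embedding degree 6 when `√-D ∉ ℚ(ζ_6)`, i.e. `D ≠ 3`. -/
theorem no_ideal_family_k6 (D : ℕ) (hD : Squarefree D) (hDpos : 0 < D) (hD3 : D ≠ 3)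
    (t r q : ℚ[X]) (h : IsCompleteFamily 6 D t r q) :
    q.natDegree ≠ r.natDegree := by
  obtain ⟨ht0, hr0, hq0, hrP, hqP, hdvd1, hdvd2, y, hy⟩ := h
  intro hEq
  -- basic notation
  have hlt : t.leadingCoeff ≠ 0 := leadingCoeff_ne_zero.mpr ht0
  have hDQ : (0:ℚ) < (D:ℚ) := by exact_mod_cast hDpos
  have hr1 : 0 < r.natDegree := hrP.1
  -- r ∣ t^2 - 3t + 3
  have hP : r ∣ t ^ 2 - 3 * t + 3 := by
    rw [cyclotomic_six'] at hdvd2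
    have hc : ((X:ℚ[X]) ^ 2 - X + 1).comp (t - 1) = t ^ 2 - 3 * t + 3 := by
      simp only [sub_comp, add_comp, pow_comp, X_comp, one_comp]
      ring
    rwa [hc] at hdvd2
  have hPne : t ^ 2 - 3 * t + 3 ≠ 0 := by
    intro hc
    have := congrArg (eval 0) hc
    simp only [eval_add, eval_sub, eval_mul, eval_pow, eval_ofNat, eval_zero] at this
    nlinarith [sq_nonneg (2 * t.eval 0 - 3), this]
  have hnrP : r.natDegree ≤ (t ^ 2 - 3 * t + 3).natDegree := natDegree_le_of_dvd hP hPne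
  have hPle : (t ^ 2 - 3 * t + 3).natDegree ≤ 2 * t.natDegree := by
    calc (t ^ 2 - 3 * t + 3).natDegree ≤ max (t^2 - 3*t).natDegree (3:ℚ[X]).natDegree :=
        natDegree_add_le _ _
    _ ≤ _ := by
        apply max_le _ (by simp)
        calc (t^2 - 3*t).natDegree ≤ max (t^2).natDegree (3*t).natDegree := natDegree_sub_le _ _
        _ ≤ _ := by
            apply max_le (by rw [natDegree_pow])
            calc (3*t).natDegree ≤ (3:ℚ[X]).natDegree + t.natDegree := natDegree_mul_le
            _ ≤ 2 * t.natDegree := by simp; omega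
  have hnt : 1 ≤ t.natDegree := by omega
  have hco : (t ^ 2 - 3 * t + 3).coeff (2 * t.natDegree) = t.leadingCoeff ^ 2 := by
    have h1 : (3 * t).natDegree < 2 * t.natDegree := by
      calc (3 * t).natDegree ≤ (3:ℚ[X]).natDegree + t.natDegree := natDegree_mul_le
      _ < 2 * t.natDegree := by simp; omega
    have h2 : ((3:ℚ[X])).natDegree < 2 * t.natDegree := by simp; omega
    rw [coeff_add, coeff_sub, coeff_sq_two_mul, coeff_eq_zero_of_natDegree_lt h1,
      coeff_eq_zero_of_natDegree_lt h2]
    ring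
  have hPdeg : (t ^ 2 - 3 * t + 3).natDegree = 2 * t.natDegree := by
    refine le_antisymm hPle (le_natDegree_of_ne_zero ?_)
    rw [hco]
    exact pow_ne_zero 2 hlt
  -- rewrite hy with C coefficients
  have hy4 : C (4:ℚ) * q = t ^ 2 + C ((D:ℚ)) * y ^ 2 := by
    rw [C_eq_natCast, map_ofNat]
    linear_combination -hy
  -- y degree small
  have hny : y.natDegree ≤ t.natDegree := by
    by_contra hc
    push_neg at hc
    have hy0 : y ≠ 0 := by
      intro h0; rw [h0, natDegree_zero] at hc; omega
    have hcoeff := congrArg (fun p => coeff p (2 * y.natDegree)) hy4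
    simp only [coeff_C_mul, coeff_add] at hcoeff
    rw [coeff_sq_two_mul,
      coeff_eq_zero_of_natDegree_lt (p := t ^ 2) (n := 2 * y.natDegree)
        (by rw [natDegree_pow]; omega)] at hcoeff
    have hqc : q.coeff (2 * y.natDegree) ≠ 0 := by
      intro h0
      rw [h0] at hcoeff
      have hly0 : y.leadingCoeff ≠ 0 := leadingCoeff_ne_zero.mpr hy0
      have hly : (0:ℚ) < y.leadingCoeff ^ 2 :=
        lt_of_le_of_ne (sq_nonneg _) (Ne.symm (pow_ne_zero 2 hly0))
      nlinarith
    have := le_natDegree_of_ne_zero hqc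
    omega
  -- nq = nr = 2 nt
  have hq2nt : q.natDegree = 2 * t.natDegree := by
    have hup : q.natDegree ≤ 2 * t.natDegree := by omega
    have hynn : 0 ≤ (y ^ 2).coeff (2 * t.natDegree) ∨
        (y ^ 2).coeff (2 * t.natDegree) = 0 := by
      rcases eq_or_lt_of_le hny with he | hlt2
      · left
        rw [← he, coeff_sq_two_mul]
        positivity
      · right
        exact coeff_eq_zero_of_natDegree_lt (p := y ^ 2) (by rw [natDegree_pow]; omega)
    have hynn' : 0 ≤ (y ^ 2).coeff (2 * t.natDegree) := by
      rcases hynn with h | h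
      · exact h
      · rw [h]
    have hcoeff := congrArg (fun p => coeff p (2 * t.natDegree)) hy4
    simp only [coeff_C_mul, coeff_add] at hcoeff
    rw [coeff_sq_two_mul] at hcoeff
    have hqc : q.coeff (2 * t.natDegree) ≠ 0 := by
      intro h0
      rw [h0] at hcoeff
      have h1 : (0:ℚ) < t.leadingCoeff ^ 2 := by positivity
      nlinarith
    have := le_natDegree_of_ne_zero hqc
    omega
  -- extract the two constants
  obtain ⟨u, hu⟩ := hP
  have hu0 : u ≠ 0 := by rintro rfl; rw [mul_zero] at hu; exact hPne hu
  have hundeg : u.natDegree = 0 := by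
    have := natDegree_mul hr0 hu0
    rw [← hu, hPdeg] at this
    omega
  obtain ⟨c, rfl⟩ := natDegree_eq_zero.mp hundeg
  have hc0 : c ≠ 0 := fun h0 => hu0 (by rw [h0, map_zero])
  have hqt1 : q + 1 - t ≠ 0 := by
    intro h0
    have hq' : q = t - 1 := by linear_combination h0
    have : q.natDegree = t.natDegree := by
      rw [hq', show (1:ℚ[X]) = C 1 by simp, natDegree_sub_C]
    omega
  obtain ⟨v, hv⟩ := hdvd1
  have hv0 : v ≠ 0 := by rintro rfl; rw [mul_zero] at hv; exact hqt1 hv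
  have hvdeg : v.natDegree = 0 := by
    have h1 : (q + 1 - t).natDegree ≤ q.natDegree := by
      rw [show q + 1 - t = q - (t - 1) by ring]
      refine le_trans (natDegree_sub_le _ _) ?_
      rw [show (1:ℚ[X]) = C 1 by simp, natDegree_sub_C]
      omega
    have := natDegree_mul hr0 hv0
    rw [← hv] at this
    omega
  obtain ⟨c', rfl⟩ := natDegree_eq_zero.mp hvdeg
  -- master identity
  obtain ⟨A, hAc⟩ : ∃ A : ℚ, A * c = 4 * c' - c := ⟨(4 * c' - c) / c, div_mul_cancel₀ _ hc0⟩
  have hCc : C A * C c = 4 * C c' - C c := by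
    rw [← C_mul, hAc, map_sub, C_mul, map_ofNat]
  have hmain : (D:ℚ[X]) * y ^ 2 = C A * (t ^ 2 - 3 * t + 3) + (t - 1) := by
    linear_combination hy + 4 * hv - (1 + C A) * hu - r * hCc
  by_cases hA : A = 0
  · -- Case A = 0 :  4q = t^2 + t - 1, impossible mod 8
    have hc4 : C c = 4 * C c' := by
      have : c = 4 * c' := by
        have := hAc
        rw [hA, zero_mul] at this
        linarith
      rw [this, C_mul, map_ofNat]
    have hq4 : 4 * q = t ^ 2 + t - 1 := by
      linear_combination 4 * hv - hu - r * hc4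
    obtain ⟨a, n, han⟩ := hqP.2.2.2.1
    have heval := congrArg (eval (a:ℚ)) hq4
    simp only [eval_mul, eval_add, eval_sub, eval_pow, eval_ofNat, eval_one] at heval
    rw [han] at heval
    set b : ℚ := t.eval (a:ℚ) with hbdef
    have hx : (2 * b + 1) ^ 2 = ((16 * n + 5 : ℤ) : ℚ) := by
      push_cast
      nlinarith [heval]
    obtain ⟨z, _, hz2⟩ := rat_sq_int _ _ hx
    exact no_sq_16n5 z n hz2
  · -- Case A ≠ 0
    -- compare coefficients at 2 nt in hmain
    have hcoeff := congrArg (fun p => coeff p (2 * t.natDegree)) hmain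
    simp only [coeff_add, coeff_C_mul] at hcoeff
    have h3t : (3 * t).natDegree < 2 * t.natDegree := by
      calc (3 * t).natDegree ≤ (3:ℚ[X]).natDegree + t.natDegree := natDegree_mul_le
      _ < 2 * t.natDegree := by simp; omega
    rw [coeff_eq_zero_of_natDegree_lt (p := (3:ℚ[X])) (n := 2 * t.natDegree) (by simp; omega),
      add_zero, coeff_sub, coeff_sq_two_mul, coeff_eq_zero_of_natDegree_lt h3t, sub_zero,
      coeff_eq_zero_of_natDegree_lt (p := t - 1) (n := 2 * t.natDegree)
      (by rw [show (1:ℚ[X]) = C 1 by simp, natDegree_sub_C]; omega), add_zero] at hcoeff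
    rw [show ((D:ℚ[X])) = C ((D:ℚ)) by rw [C_eq_natCast], coeff_C_mul] at hcoeff
    -- y ≠ 0 and ny = nt
    have hAlt : A * t.leadingCoeff ^ 2 ≠ 0 := by
      intro h0
      rcases mul_eq_zero.mp h0 with h | h
      · exact hA h
      · exact hlt (pow_eq_zero_iff (by norm_num) |>.mp h)
    have hy0 : y ≠ 0 := by
      intro h0
      rw [h0] at hcoeff
      simp at hcoeff
      rcases hcoeff with h | h
      · exact hA h
      · exact ht0 h
    have hnyeq : y.natDegree = t.natDegree := by
      rcases eq_or_lt_of_le hny with he | hlt2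
      · exact he
      · exfalso
        rw [coeff_eq_zero_of_natDegree_lt (p := y ^ 2) (n := 2 * t.natDegree)
          (by rw [natDegree_pow]; omega), mul_zero] at hcoeff
        exact hAlt hcoeff.symm
    rw [← hnyeq, coeff_sq_two_mul] at hcoeff
    -- A = D m^2 with m = ly/lt
    have hly0 : y.leadingCoeff ≠ 0 := leadingCoeff_ne_zero.mpr hy0
    obtain ⟨m, hm0, hAm⟩ : ∃ m : ℚ, m ≠ 0 ∧ A = (D:ℚ) * m ^ 2 := by
      refine ⟨y.leadingCoeff / t.leadingCoeff, div_ne_zero hly0 hlt, ?_⟩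
      field_simp
      nlinarith [hcoeff]
    have hApos : 0 < A := by
      rw [hAm]
      have : 0 < m ^ 2 := lt_of_le_of_ne (sq_nonneg _) (Ne.symm (pow_ne_zero 2 hm0))
      positivity
    have hAmC : C A = (D:ℚ[X]) * C m ^ 2 := by
      rw [hAm, C_mul, ← C_pow, C_eq_natCast]
    have hΔmap : (1 - 3 * C A) * (1 + C A) = C ((1 - 3 * A) * (1 + A)) := by
      rw [C_mul, map_sub, map_add, C_mul, map_one, map_ofNat]
    have hkey : (2 * C A * t + (1 - 3 * C A)) ^ 2 - (2 * (D:ℚ[X]) * C m * y) ^ 2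
        = C ((1 - 3 * A) * (1 + A)) := by
      rw [← hΔmap]
      linear_combination (-4 : ℚ[X]) * C A * hmain + 4 * (D:ℚ[X]) * y ^ 2 * hAmC
    by_cases hΔ0 : (1 - 3 * A) * (1 + A) = 0
    · -- A = 1/3, so 3D is a rational square: contradiction with D squarefree, D ≠ 3
      have hA13 : A = 1/3 := by
        rcases mul_eq_zero.mp hΔ0 with h | h
        · linarith
        · linarith
      have hm2 : (D:ℚ) * m ^ 2 = 1/3 := by rw [← hAm, hA13]
      have hxsq : (m⁻¹) ^ 2 = ((3 * D : ℤ) : ℚ) := by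
        push_cast
        field_simp
        linarith [hm2]
      obtain ⟨z, _, hz2⟩ := rat_sq_int _ _ hxsq
      have hzz : (z.natAbs * z.natAbs : ℕ) = 3 * D := by
        have h1 : ((z.natAbs * z.natAbs : ℕ) : ℤ) = ((3 * D : ℕ) : ℤ) := by
          push_cast
          rw [abs_mul_abs_self]
          nlinarith [hz2]
        exact_mod_cast h1
      have h3K : 3 ∣ z.natAbs := by
        refine Nat.Prime.dvd_of_dvd_pow (p := 3) (n := 2) Nat.prime_three ?_
        rw [sq, hzz]
        exact Dvd.intro D rfl
      obtain ⟨j, hj⟩ := h3K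
      have hDj : D = 3 * (j * j) := by
        rw [hj] at hzz
        nlinarith [hzz]
      have hjj : j * j ∣ D := ⟨3, by rw [hDj]; ring⟩
      have := Nat.isUnit_iff.mp (hD j hjj)
      rw [this] at hDj
      omega
    · -- Δ ≠ 0 : the two factors are units, so t is constant: contradiction
      have hfac : ((2 * C A * t + (1 - 3 * C A)) - 2 * (D:ℚ[X]) * C m * y)
          * ((2 * C A * t + (1 - 3 * C A)) + 2 * (D:ℚ[X]) * C m * y)
          = C ((1 - 3 * A) * (1 + A)) := by
        linear_combination hkey
      have hunit : IsUnit (C ((1 - 3 * A) * (1 + A)) : ℚ[X]) :=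
        isUnit_C.mpr (Ne.isUnit hΔ0)
      have hu1 : IsUnit ((2 * C A * t + (1 - 3 * C A)) - 2 * (D:ℚ[X]) * C m * y) :=
        isUnit_of_mul_isUnit_left (hfac ▸ hunit)
      have hu2 : IsUnit ((2 * C A * t + (1 - 3 * C A)) + 2 * (D:ℚ[X]) * C m * y) :=
        isUnit_of_mul_isUnit_right (hfac ▸ hunit)
      obtain ⟨γ₁, _, hγ₁⟩ := Polynomial.isUnit_iff.mp hu1
      obtain ⟨γ₂, _, hγ₂⟩ := Polynomial.isUnit_iff.mp hu2
      have h4a : C (4 * A) * t = C (γ₁ + γ₂ - 2 + 6 * A) := by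
        rw [C_mul, map_ofNat, map_add, map_sub, map_add, C_mul, map_ofNat, map_ofNat]
        linear_combination - hγ₁ - hγ₂
      have h4A0 : (4 : ℚ) * A ≠ 0 := by
        intro h0
        apply hA
        linarith [mul_eq_zero.mp h0]
      have hCA0 : (C (4 * A) : ℚ[X]) ≠ 0 := fun h0 => h4A0 (by
        have := congrArg (fun p => coeff p 0) h0
        simpa using this)
      have htC : t = C ((γ₁ + γ₂ - 2 + 6 * A) / (4 * A)) := by
        apply mul_left_cancel₀ hCA0
        rw [h4a, ← C_mul, mul_div_cancel₀ _ h4A0]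
      have : t.natDegree = 0 := by rw [htC, natDegree_C]
      omega
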